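/- arXiv:1304.6373 — 2 statements merged into one kernel-verified Lean document; each statement's English description precedes it below -/
import Mathlib

section
/- Let $A$ be a (graded) commutative unital algebra with an odd second-order differential operator $\Delta$ satisfying $\Delta^2 = 0$ and $\Delta(1) = 0$, and set $[a,b] = \Delta(ab) - \Delta(a)b - (-1)^{|a|}a\Delta(b)$. Then for any even nilpotent element $\xi \in A$, $\Delta(e^\xi) = e^\xi\left(\Delta(\xi) + \tfrac{1}{2}[\xi,\xi]\right)$. -/
open Finset

/-- The operator of multiplication by `a`. -/
noncomputable def mulOp (k : Type*) {A : Type*} [Field k] [CommRing A] [Algebra k A]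
    (a : A) : Module.End k A :=
  LinearMap.mulLeft k a

/-- Commutator of two operators. -/
def opComm {k A : Type*} [Field k] [CommRing A] [Algebra k A]
    (D E : Module.End k A) : Module.End k A :=
  D * E - E * D

/-- Iterated commutator `[[…[D,a₁]…],aₙ]` of an operator with multiplication operators. -/
noncomputable def itComm (k : Type*) {A : Type*} [Field k] [CommRing A] [Algebra k A]
    (D : Module.End k A) : List A → Module.End k A
  | [] => D
  | a :: l => itComm k (opComm D (mulOp k a)) l

/-- `DOp k (n+1)` is the set of differential operators of order at most `n`, in the
Grothendieck sense: `DOp k 0 = F₋₁ = {0}` and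
`Fₙ = DOp k (n+1) = {D | ∀ a, [D,a] ∈ Fₙ₋₁}`. -/
def DOp (k : Type*) {A : Type*} [Field k] [CommRing A] [Algebra k A] :
    ℕ → Set (Module.End k A)
  | 0 => {0}
  | n + 1 => {D | ∀ a : A, opComm D (mulOp k a) ∈ DOp k n}

/-- Truncated exponential; equals the full exponential when `ξ^N = 0`. -/
noncomputable def expT (k : Type*) {A : Type*} [Field k] [CommRing A] [Algebra k A]
    (N : ℕ) (ξ : A) : A :=
  ∑ n ∈ range N, (n.factorial : k)⁻¹ • ξ ^ n

section Aux

variable {k A : Type*} [Field k] [CharZero k] [CommRing A] [Algebra k A]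
  (Δ : Module.End k A) (ξ : A)

omit [CharZero k] in
/-- Second-order identity: `[[Δ,ξ],ξ]` is multiplication by its value at `1`. -/
lemma stmt9_key (h0 : Δ 1 = 0)
    (h2 : ∀ a b c : A, opComm (opComm (opComm Δ (mulOp k a)) (mulOp k b)) (mulOp k c) = 0)
    (x : A) :
    Δ (ξ * (ξ * x)) = 2 * (ξ * Δ (ξ * x)) - ξ * ξ * Δ x + x * (Δ (ξ * ξ) - 2 * (ξ * Δ ξ)) := by
  have h := congrArg (fun (D : Module.End k A) => D 1) (h2 ξ ξ x)
  simp [opComm, mulOp, LinearMap.sub_apply, Module.End.mul_apply, LinearMap.mulLeft_apply] at h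
  linear_combination h + ξ ^ 2 * x * h0

omit [CharZero k] in
/-- Closed formula for `Δ(ξ^(n+2))`, with natural-number coefficients. -/
lemma stmt9_closedN (h0 : Δ 1 = 0)
    (h2 : ∀ a b c : A, opComm (opComm (opComm Δ (mulOp k a)) (mulOp k b)) (mulOp k c) = 0) :
    ∀ n : ℕ, 2 • Δ (ξ ^ (n+2)) = (2*(n+2)) • (ξ ^ (n+1) * Δ ξ)
      + ((n+1)*(n+2)) • (ξ ^ n * (Δ (ξ * ξ) - Δ ξ * ξ - ξ * Δ ξ)) := by
  have P : ∀ n : ℕ, (2 • Δ (ξ ^ (n+2)) = (2*(n+2)) • (ξ ^ (n+1) * Δ ξ)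
      + ((n+1)*(n+2)) • (ξ ^ n * (Δ (ξ * ξ) - Δ ξ * ξ - ξ * Δ ξ)))
      ∧ (2 • Δ (ξ ^ (n+3)) = (2*(n+3)) • (ξ ^ (n+2) * Δ ξ)
      + ((n+2)*(n+3)) • (ξ ^ (n+1) * (Δ (ξ * ξ) - Δ ξ * ξ - ξ * Δ ξ))) := by
    intro n
    induction n with
    | zero =>
      constructor
      · rw [show ξ ^ (0+2) = ξ * ξ by ring]
        simp only [nsmul_eq_mul]
        push_cast
        ring
      · have hk := stmt9_key Δ ξ h0 h2 ξ
        rw [show ξ ^ (0+3) = ξ * (ξ * ξ) by ring]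
        simp only [nsmul_eq_mul]
        push_cast
        linear_combination 2 * hk
    | succ m ih =>
      refine ⟨ih.2, ?_⟩
      have hk := stmt9_key Δ ξ h0 h2 (ξ ^ (m+2))
      rw [show ξ * (ξ * ξ ^ (m+2)) = ξ ^ (m+4) by ring,
        show ξ * ξ ^ (m+2) = ξ ^ (m+3) by ring] at hk
      have i1 := ih.1
      have i2 := ih.2
      simp only [nsmul_eq_mul] at i1 i2 ⊢
      push_cast at i1 i2 ⊢
      rw [show m + 1 + 3 = m + 4 from rfl, show m + 1 + 2 = m + 3 from rfl]
      linear_combination 2 * hk + 2 * ξ * i2 - ξ * ξ * i1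
  exact fun n => (P n).1

/-- Closed formula for `Δ(ξ^(n+2))`, divided by factorials. -/
lemma stmt9_closedK (h0 : Δ 1 = 0)
    (h2 : ∀ a b c : A, opComm (opComm (opComm Δ (mulOp k a)) (mulOp k b)) (mulOp k c) = 0)
    (n : ℕ) :
    (((n+2).factorial : k)⁻¹) • Δ (ξ ^ (n+2)) = ((n+1).factorial : k)⁻¹ • (ξ ^ (n+1) * Δ ξ)
      + ((n.factorial : k)⁻¹ * (2:k)⁻¹) • (ξ ^ n * (Δ (ξ * ξ) - Δ ξ * ξ - ξ * Δ ξ)) := by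
  have h := stmt9_closedN Δ ξ h0 h2 n
  simp only [← Nat.cast_smul_eq_nsmul k] at h
  have h' := congrArg (fun z : A => ((((n+2).factorial : k)⁻¹ * 2⁻¹)) • z) h
  simp only [smul_add, smul_smul] at h'
  have h1 : ((n+1).factorial : k) ≠ 0 := Nat.cast_ne_zero.mpr (n+1).factorial_ne_zero
  have hn0 : (n.factorial : k) ≠ 0 := Nat.cast_ne_zero.mpr n.factorial_ne_zero
  have h3 : ((n:k)+2) ≠ 0 := by
    have := Nat.cast_ne_zero (R := k).mpr (show n+2 ≠ 0 by omega)
    push_cast at this; exact this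
  have h4 : ((n:k)+1) ≠ 0 := by
    have := Nat.cast_ne_zero (R := k).mpr (show n+1 ≠ 0 by omega)
    push_cast at this; exact this
  have hf2 : (((n+2)).factorial : k) = ((n:k)+2) * (((n:k)+1) * (n.factorial : k)) := by
    rw [show n+2 = (n+1)+1 from rfl, Nat.factorial_succ, Nat.factorial_succ]; push_cast; ring
  have hf1 : (((n+1)).factorial : k) = ((n:k)+1) * (n.factorial : k) := by
    rw [Nat.factorial_succ]; push_cast; ring
  have hN : ((n+2).factorial : k) ≠ 0 := Nat.cast_ne_zero.mpr (n+2).factorial_ne_zero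
  have e1 : (((n+2).factorial : k)⁻¹ * 2⁻¹) * ((2:ℕ):k) = ((n+2).factorial : k)⁻¹ := by
    push_cast; field_simp
  have e2 : (((n+2).factorial : k)⁻¹ * 2⁻¹) * ((2*(n+2) : ℕ) : k)
      = ((n+1).factorial : k)⁻¹ := by
    rw [hf2, hf1]; push_cast; field_simp
  have e3 : (((n+2).factorial : k)⁻¹ * 2⁻¹) * (((n+1)*(n+2) : ℕ) : k)
      = (n.factorial : k)⁻¹ * 2⁻¹ := by
    rw [hf2]; push_cast; field_simp
  rw [e1, e2, e3] at h'
  exact h'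

/-- Summed identity, no nilpotency needed. -/
lemma stmt9_sum (h0 : Δ 1 = 0)
    (h2 : ∀ a b c : A, opComm (opComm (opComm Δ (mulOp k a)) (mulOp k b)) (mulOp k c) = 0) :
    ∀ M : ℕ, ∑ n ∈ range (M+2), (n.factorial : k)⁻¹ • Δ (ξ ^ n)
      = ∑ m ∈ range (M+1), (m.factorial : k)⁻¹ • (ξ ^ m * Δ ξ)
        + ∑ m ∈ range M, ((m.factorial : k)⁻¹ * (2:k)⁻¹)
            • (ξ ^ m * (Δ (ξ * ξ) - Δ ξ * ξ - ξ * Δ ξ)) := by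
  intro M
  induction M with
  | zero =>
    simp [Finset.sum_range_succ, h0, Nat.factorial]
  | succ M ih =>
    rw [show M + 1 + 2 = (M + 2) + 1 from rfl, Finset.sum_range_succ, ih,
      stmt9_closedK Δ ξ h0 h2 M,
      Finset.sum_range_succ (f := fun m => ((m.factorial : k))⁻¹ • (ξ ^ m * Δ ξ)) (n := M+1),
      Finset.sum_range_succ
        (f := fun m => (((m.factorial : k))⁻¹ * (2:k)⁻¹)
          • (ξ ^ m * (Δ (ξ * ξ) - Δ ξ * ξ - ξ * Δ ξ))) (n := M)]
    abel
end Aux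

/-- For a second-order operator `Δ` with `Δ² = 0`, `Δ(1) = 0`, bracket
`[a,b] = Δ(ab) - Δ(a)b - aΔ(b)` (for `a` even), and an even nilpotent `ξ`:
`Δ(e^ξ) = e^ξ (Δ(ξ) + ½[ξ,ξ])`.  (Formalized on the even part, i.e. for an ungraded
commutative algebra, where all Koszul signs are `+1`.) -/
theorem stmt9 {k A : Type*} [Field k] [CharZero k] [CommRing A] [Algebra k A]
    (Δ : Module.End k A)
    (h2 : ∀ a b c : A, opComm (opComm (opComm Δ (mulOp k a)) (mulOp k b)) (mulOp k c) = 0)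
    (h0 : Δ 1 = 0) (hsq : Δ * Δ = 0)
    (ξ : A) (N : ℕ) (hξ : ξ ^ N = 0) :
    Δ (expT k N ξ) =
      expT k N ξ * (Δ ξ + (2 : k)⁻¹ • (Δ (ξ * ξ) - Δ ξ * ξ - ξ * Δ ξ)) := by
  have hpow : ∀ n : ℕ, N ≤ n → ξ ^ n = 0 := by
    intro n hn
    rw [show n = N + (n - N) by omega, pow_add, hξ, zero_mul]
  have hext : expT k N ξ = expT k (N+2) ξ := by
    rw [expT, expT, Finset.sum_range_succ, Finset.sum_range_succ,
      hpow N le_rfl, hpow (N+1) (by omega)]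
    simp
  rw [hext]
  have hmap : Δ (expT k (N+2) ξ) = ∑ n ∈ range (N+2), (n.factorial : k)⁻¹ • Δ (ξ ^ n) := by
    rw [expT, map_sum]
    exact Finset.sum_congr rfl fun n _ => by rw [map_smul]
  rw [hmap, stmt9_sum Δ ξ h0 h2 N, Finset.sum_range_succ, hpow N le_rfl]
  rw [← hext, expT, Finset.sum_mul]
  simp only [zero_mul, smul_zero, add_zero]
  rw [← Finset.sum_add_distrib]
  refine Finset.sum_congr rfl fun n _ => ?_
  simp only [smul_mul_assoc, mul_add, mul_smul_comm, smul_add, smul_smul]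
  module
end

section
/- Let $A$ be a unital commutative algebra over a field $k$ of characteristic zero and let $D_0, D_1, D_2, \dots$ be operators on $A$ such that each $D_i$ is a differential operator of order at most $i+1$, and $D = \sum_i h^i D_i$ on $A[[h]]$ satisfies $D^2 = 0$. Then writing the $D$-derived brackets $m_n(a_1, \dots, a_n) = [[\dots[D, a_1]\dots], a_n](1)$ for $a_i \in A \subseteq A[[h]]$, each $m_n$ takes values in $h^{n-1} A[[h]]$, so that $m_n / h^{n-1}$ is a well-defined map $A^{\otimes n} \to A[[h]]$. -/
open Finset

lemma opComm_mem_DOp' {k A : Type*} [Field k] [CommRing A] [Algebra k A]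
    {D : Module.End k A} {j : ℕ} (h : D ∈ DOp k j) (a : A) :
    opComm D (mulOp k a) ∈ DOp k (j - 1) := by
  cases j with
  | zero =>
    simp only [DOp, Set.mem_singleton_iff] at h ⊢
    simp [h, opComm, DOp]
  | succ j => exact h a

lemma itComm_mem_DOp' {k A : Type*} [Field k] [CommRing A] [Algebra k A]
    {D : Module.End k A} {j : ℕ} (h : D ∈ DOp k j) (l : List A) :
    itComm k D l ∈ DOp k (j - l.length) := by
  induction l generalizing D j with
  | nil => simpa [itComm] using h
  | cons a l ih =>
    have := ih (opComm_mem_DOp' h a)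
    simpa [itComm, Nat.sub_sub, Nat.add_comm] using this

lemma itComm_coeff' {k A : Type*} [Field k] [CommRing A] [Algebra k A]
    (Di : ℕ → Module.End k A)
    (D : Module.End k (PowerSeries A))
    (hD : ∀ (f : PowerSeries A) (m : ℕ),
      PowerSeries.coeff (R := A) m (D f) =
        ∑ i ∈ Finset.range (m + 1), Di i (PowerSeries.coeff (R := A) (m - i) f))
    (l : List A) :
    ∀ (f : PowerSeries A) (m : ℕ),
      PowerSeries.coeff (R := A) m (itComm k D (l.map fun a => PowerSeries.C (R := A) a) f) =
        ∑ i ∈ Finset.range (m + 1), itComm k (Di i) l (PowerSeries.coeff (R := A) (m - i) f) := by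
  induction l generalizing D Di with
  | nil => exact hD
  | cons a l ih =>
    refine ih (fun i => opComm (Di i) (mulOp k a)) _ ?_
    intro f m
    simp only [opComm, mulOp, LinearMap.sub_apply, Module.End.mul_apply, map_sub,
      LinearMap.mulLeft_apply, hD, PowerSeries.coeff_C_mul, Finset.mul_sum,
      ← Finset.sum_sub_distrib]

/-- Let `A` be a unital commutative algebra over a field `k` of characteristic zero and
`D₀, D₁, D₂, …` operators on `A` with `Dᵢ` a differential operator of order at most
`i+1` (i.e. `Dᵢ ∈ DOp k (i+2)`).  Let `D = ∑ hⁱ Dᵢ` be the induced operator on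
`A[[h]]` (characterized coefficientwise: `(D f)ₘ = ∑_{i≤m} Dᵢ(f_{m-i})`), and suppose
`D² = 0`.  Then each derived bracket `mₙ(a₁,…,aₙ) = [[…[D,a₁]…],aₙ](1)` with
`aᵢ ∈ A ⊆ A[[h]]` takes values in `h^{n-1} A[[h]]`, i.e. is divisible by `X^{n-1}`,
so that `mₙ/h^{n-1}` is a well-defined map `Aⁿ → A[[h]]`. -/
theorem stmt19 {k A : Type*} [Field k] [CharZero k] [CommRing A] [Algebra k A]
    (Di : ℕ → Module.End k A)
    (hDi : ∀ i : ℕ, Di i ∈ DOp k (i + 2))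
    (D : Module.End k (PowerSeries A))
    (hD : ∀ (f : PowerSeries A) (m : ℕ),
      PowerSeries.coeff (R := A) m (D f) =
        ∑ i ∈ Finset.range (m + 1), Di i (PowerSeries.coeff (R := A) (m - i) f))
    (hsq : D * D = 0)
    (n : ℕ) (l : List A) (hl : l.length = n) :
    (PowerSeries.X : PowerSeries A) ^ (n - 1) ∣
      itComm k D (l.map fun a => PowerSeries.C (R := A) a) 1 := by
  rw [PowerSeries.X_pow_dvd_iff]
  intro m hm
  rw [itComm_coeff' Di D hD l]
  apply Finset.sum_eq_zero
  intro i hi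
  have hi' := Finset.mem_range.mp hi
  have h2 : i + 2 - n = 0 := by omega
  have := itComm_mem_DOp' (hDi i) l
  rw [hl, h2] at this
  simp only [DOp, Set.mem_singleton_iff] at this
  rw [this]
  simp
end
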